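/- For every n ≥ 1, every nilpotent endomorphism (f₁,f₂,f₃,f₄) of the representation N_n of Q satisfies: f₁=f₂=f₃=f₄ and the image of f₁ is contained in the image of J_n(0); consequently the endomorphism induces the zero map on the cokernel of m_a = J_n(0): kⁿ → kⁿ. -/

import Mathlib

variable (k : Type) [Field k]

/-- A finite-dimensional representation of the quiver `Q` with vertices `1,2,3,4`
and arrows `a : 1 → 2`, `b : 1 → 3`, `c : 2 → 4`, `d : 3 → 4`. -/
structure QRep where
  V1 : Type
  V2 : Type
  V3 : Type
  V4 : Type
  [acg1 : AddCommGroup V1]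
  [acg2 : AddCommGroup V2]
  [acg3 : AddCommGroup V3]
  [acg4 : AddCommGroup V4]
  [mod1 : Module k V1]
  [mod2 : Module k V2]
  [mod3 : Module k V3]
  [mod4 : Module k V4]
  [fin1 : FiniteDimensional k V1]
  [fin2 : FiniteDimensional k V2]
  [fin3 : FiniteDimensional k V3]
  [fin4 : FiniteDimensional k V4]
  ma : V1 →ₗ[k] V2
  mb : V1 →ₗ[k] V3
  mc : V2 →ₗ[k] V4
  md : V3 →ₗ[k] V4

attribute [instance] QRep.acg1 QRep.acg2 QRep.acg3 QRep.acg4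
  QRep.mod1 QRep.mod2 QRep.mod3 QRep.mod4
  QRep.fin1 QRep.fin2 QRep.fin3 QRep.fin4

variable {k}

/-- Morphisms of representations of `Q`. -/
@[ext]
structure QHom (M N : QRep k) where
  f1 : M.V1 →ₗ[k] N.V1
  f2 : M.V2 →ₗ[k] N.V2
  f3 : M.V3 →ₗ[k] N.V3
  f4 : M.V4 →ₗ[k] N.V4
  comm_a : f2 ∘ₗ M.ma = N.ma ∘ₗ f1
  comm_b : f3 ∘ₗ M.mb = N.mb ∘ₗ f1
  comm_c : f4 ∘ₗ M.mc = N.mc ∘ₗ f2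
  comm_d : f4 ∘ₗ M.md = N.md ∘ₗ f3

/-- Two representations are isomorphic iff there is a morphism all of whose
components are bijective. -/
def QIso (M N : QRep k) : Prop :=
  ∃ f : QHom M N, Function.Bijective f.f1 ∧ Function.Bijective f.f2 ∧
    Function.Bijective f.f3 ∧ Function.Bijective f.f4

/-- The zero representation(s). -/
def QRep.IsZeroRep (M : QRep k) : Prop :=
  Subsingleton M.V1 ∧ Subsingleton M.V2 ∧ Subsingleton M.V3 ∧ Subsingleton M.V4

/-- Vertexwise direct sum of representations. -/
def QRep.dsum (M N : QRep k) : QRep k where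
  V1 := M.V1 × N.V1
  V2 := M.V2 × N.V2
  V3 := M.V3 × N.V3
  V4 := M.V4 × N.V4
  ma := M.ma.prodMap N.ma
  mb := M.mb.prodMap N.mb
  mc := M.mc.prodMap N.mc
  md := M.md.prodMap N.md

/-- Direct sum of `n` copies of a representation. -/
def QRep.dpow (M : QRep k) (n : ℕ) : QRep k where
  V1 := Fin n → M.V1
  V2 := Fin n → M.V2
  V3 := Fin n → M.V3
  V4 := Fin n → M.V4
  ma := M.ma.compLeft (Fin n)
  mb := M.mb.compLeft (Fin n)
  mc := M.mc.compLeft (Fin n)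
  md := M.md.compLeft (Fin n)

/-- A representation is indecomposable if it is nonzero and not isomorphic to a
direct sum of two nonzero representations. -/
def QRep.Indecomposable (M : QRep k) : Prop :=
  ¬ M.IsZeroRep ∧ ∀ A B : QRep k, QIso M (A.dsum B) → A.IsZeroRep ∨ B.IsZeroRep

/-- `0 → A → B → C → 0` is short exact (vertexwise). -/
def QShortExact {A B C : QRep k} (f : QHom A B) (g : QHom B C) : Prop :=
  (Function.Injective f.f1 ∧ Function.Injective f.f2 ∧
    Function.Injective f.f3 ∧ Function.Injective f.f4) ∧
  (Function.Surjective g.f1 ∧ Function.Surjective g.f2 ∧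
    Function.Surjective g.f3 ∧ Function.Surjective g.f4) ∧
  (LinearMap.range f.f1 = LinearMap.ker g.f1 ∧ LinearMap.range f.f2 = LinearMap.ker g.f2 ∧
    LinearMap.range f.f3 = LinearMap.ker g.f3 ∧ LinearMap.range f.f4 = LinearMap.ker g.f4)

variable (k)

/-- The `n×n` Jordan block with eigenvalue `lam`, as a linear endomorphism of `kⁿ`. -/
def jordan (n : ℕ) (lam : k) : (Fin n → k) →ₗ[k] (Fin n → k) :=
  Matrix.mulVecLin (Matrix.of fun i j : Fin n =>
    if i = j then lam else if (i : ℕ) + 1 = (j : ℕ) then 1 else 0)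

/-- The representation `M_n(λ) = (kⁿ,kⁿ,kⁿ,kⁿ; id,id,id,J_n(λ))`. -/
def Mlam (n : ℕ) (lam : k) : QRep k where
  V1 := Fin n → k
  V2 := Fin n → k
  V3 := Fin n → k
  V4 := Fin n → k
  ma := LinearMap.id
  mb := LinearMap.id
  mc := LinearMap.id
  md := jordan k n lam

/-- The indecomposable projective `P₁ = (k,k,k,k²)`. -/
def P1 : QRep k where
  V1 := k
  V2 := k
  V3 := k
  V4 := k × k
  ma := LinearMap.id
  mb := LinearMap.id
  mc := LinearMap.inl k k k
  md := LinearMap.inr k k k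

/-- The indecomposable projective `P₂ = (0,k,0,k)`. -/
def P2 : QRep k where
  V1 := Fin 0 → k
  V2 := k
  V3 := Fin 0 → k
  V4 := k
  ma := 0
  mb := 0
  mc := LinearMap.id
  md := 0

/-- The indecomposable projective `P₃ = (0,0,k,k)`. -/
def P3 : QRep k where
  V1 := Fin 0 → k
  V2 := Fin 0 → k
  V3 := k
  V4 := k
  ma := 0
  mb := 0
  mc := 0
  md := LinearMap.id

/-- The indecomposable projective `P₄ = (0,0,0,k)`. -/
def P4 : QRep k where
  V1 := Fin 0 → k
  V2 := Fin 0 → k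
  V3 := Fin 0 → k
  V4 := k
  ma := 0
  mb := 0
  mc := 0
  md := 0

/-- The special-tube representation `N_n = (kⁿ,kⁿ,kⁿ,kⁿ; J_n(0),id,id,id)`. -/
def Nrep (n : ℕ) : QRep k where
  V1 := Fin n → k
  V2 := Fin n → k
  V3 := Fin n → k
  V4 := Fin n → k
  ma := jordan k n 0
  mb := LinearMap.id
  mc := LinearMap.id
  md := LinearMap.id

variable {k}

lemma QHom.comm_a_apply {M N : QRep k} (f : QHom M N) (x : M.V1) :
    f.f2 (M.ma x) = N.ma (f.f1 x) := LinearMap.congr_fun f.comm_a x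

lemma QHom.comm_b_apply {M N : QRep k} (f : QHom M N) (x : M.V1) :
    f.f3 (M.mb x) = N.mb (f.f1 x) := LinearMap.congr_fun f.comm_b x

lemma QHom.comm_c_apply {M N : QRep k} (f : QHom M N) (x : M.V2) :
    f.f4 (M.mc x) = N.mc (f.f2 x) := LinearMap.congr_fun f.comm_c x

lemma QHom.comm_d_apply {M N : QRep k} (f : QHom M N) (x : M.V3) :
    f.f4 (M.md x) = N.md (f.f3 x) := LinearMap.congr_fun f.comm_d x

/-- The identity morphism of a representation. -/
def QHom.idHom (M : QRep k) : QHom M M :=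
  ⟨LinearMap.id, LinearMap.id, LinearMap.id, LinearMap.id, by simp, by simp, by simp, by simp⟩

/-- Composition of morphisms of representations. -/
def QHom.comp {L M N : QRep k} (g : QHom M N) (f : QHom L M) : QHom L N where
  f1 := g.f1 ∘ₗ f.f1
  f2 := g.f2 ∘ₗ f.f2
  f3 := g.f3 ∘ₗ f.f3
  f4 := g.f4 ∘ₗ f.f4
  comm_a := by ext x; simp [QHom.comm_a_apply]
  comm_b := by ext x; simp [QHom.comm_b_apply]
  comm_c := by ext x; simp [QHom.comm_c_apply]
  comm_d := by ext x; simp [QHom.comm_d_apply]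

/-- The zero morphism. -/
def QHom.zeroHom (M N : QRep k) : QHom M N :=
  ⟨0, 0, 0, 0, by simp, by simp, by simp, by simp⟩

/-- Iterated composition power of an endomorphism. -/
def QHom.pow {M : QRep k} (f : QHom M M) : ℕ → QHom M M
  | 0 => QHom.idHom M
  | m + 1 => f.comp (f.pow m)

/-- An endomorphism is nilpotent if some composition power of it vanishes. -/
def QHom.IsNilpotent {M : QRep k} (f : QHom M M) : Prop :=
  ∃ m : ℕ, f.pow m = QHom.zeroHom M M

lemma jordan_zero_apply {k : Type} [Field k] (n : ℕ) (v : Fin n → k) (i : Fin n) :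
    jordan k n 0 v i = if h : (i : ℕ) + 1 < n then v ⟨(i : ℕ) + 1, h⟩ else 0 := by
  simp only [jordan, Matrix.mulVecLin_apply, Matrix.mulVec, dotProduct, Matrix.of_apply]
  split_ifs with h
  · rw [Finset.sum_eq_single (⟨(i : ℕ) + 1, h⟩ : Fin n)]
    · have h2 : ¬ (i = (⟨(i : ℕ) + 1, h⟩ : Fin n)) := by
        intro he; have := congrArg Fin.val he; simp at this
      simp [h2]
    · intro j _ hj
      have h1 : ¬ ((i : ℕ) + 1 = (j : ℕ)) := fun he => hj (by ext; simp; omega)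
      by_cases h2 : i = j
      · simp [h2]
      · simp [h2, h1]
    · simp
  · apply Finset.sum_eq_zero
    intro j _
    have h1 : ¬ ((i : ℕ) + 1 = (j : ℕ)) := by have := j.isLt; omega
    by_cases h2 : i = j
    · simp [h2]
    · simp [h2, h1]

lemma range_jordan_zero {k : Type} [Field k] (n : ℕ) (hn : 1 ≤ n) :
    LinearMap.range (jordan k n 0) =
      LinearMap.ker (LinearMap.proj (⟨n - 1, by omega⟩ : Fin n) :
        (Fin n → k) →ₗ[k] k) := by
  ext v
  simp only [LinearMap.mem_range, LinearMap.mem_ker, LinearMap.proj_apply]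
  constructor
  · rintro ⟨w, rfl⟩
    rw [jordan_zero_apply]
    exact dif_neg (show ¬ (n - 1 + 1 < n) by omega)
  · intro hv
    refine ⟨fun i => if h : 1 ≤ (i : ℕ) then v ⟨(i : ℕ) - 1, by omega⟩ else 0, ?_⟩
    funext i
    rw [jordan_zero_apply]
    by_cases h : (i : ℕ) + 1 < n
    · rw [dif_pos h]
      simp
    · rw [dif_neg h]
      have : i = (⟨n - 1, by omega⟩ : Fin n) := by ext; have := i.isLt; simp; omega
      rw [this]
      exact hv.symm

/-- every nilpotent endomorphism `(f₁,f₂,f₃,f₄)` of `N_n` satisfies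
`f₁ = f₂ = f₃ = f₄`, the image of `f₁` is contained in the image of `J_n(0)`, and
the endomorphism induces the zero map on the cokernel of `m_a = J_n(0)`. -/
theorem stmt3 (k : Type) [Field k] (n : ℕ) (hn : 1 ≤ n)
    (f : QHom (Nrep k n) (Nrep k n)) (hf : f.IsNilpotent) :
    (f.f1 = f.f2 ∧ f.f2 = f.f3 ∧ f.f3 = f.f4) ∧
    LinearMap.range f.f1 ≤ LinearMap.range (jordan k n 0) ∧
    (LinearMap.range (jordan k n 0)).mkQ ∘ₗ f.f2 = 0 := by
  obtain ⟨m, hm⟩ := hf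
  -- component equalities
  have h31 : f.f3 = f.f1 := LinearMap.ext fun x => LinearMap.congr_fun f.comm_b x
  have h42 : f.f4 = f.f2 := LinearMap.ext fun x => LinearMap.congr_fun f.comm_c x
  have h43 : f.f4 = f.f3 := LinearMap.ext fun x => LinearMap.congr_fun f.comm_d x
  have h12 : f.f1 = f.f2 := by rw [← h31, ← h43, h42]
  -- f2 commutes with J
  have hJ : f.f2 ∘ₗ jordan k n 0 = jordan k n 0 ∘ₗ f.f2 := by
    have := f.comm_a
    simp only [Nrep] at this
    exact LinearMap.ext fun x => by have h := LinearMap.congr_fun f.comm_a x; rw [h12] at h; exact h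
  set last : Fin n := ⟨n - 1, by omega⟩ with hlast
  set ℓ : (Fin n → k) →ₗ[k] k := LinearMap.proj last with hℓ
  have hker : LinearMap.range (jordan k n 0) = LinearMap.ker ℓ := range_jordan_zero n hn
  have hpres : ∀ v : Fin n → k, ℓ v = 0 → ℓ (f.f2 v) = 0 := by
    intro v hv
    have hv' : v ∈ LinearMap.range (jordan k n 0) := by
      rw [hker]; exact hv
    obtain ⟨w, rfl⟩ := hv'
    have h1 : f.f2 (jordan k n 0 w) = jordan k n 0 (f.f2 w) := LinearMap.congr_fun hJ w
    rw [h1]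
    have : jordan k n 0 (f.f2 w) ∈ LinearMap.ker ℓ := by
      rw [← hker]; exact ⟨f.f2 w, rfl⟩
    exact this
  set e : Fin n → k := Pi.single last 1 with he
  have hℓe : ℓ e = 1 := by simp [hℓ, he]
  set c : k := ℓ (f.f2 e) with hc
  have key : ∀ v : Fin n → k, ℓ (f.f2 v) = c * ℓ v := by
    intro v
    have hv0 : ℓ (v - ℓ v • e) = 0 := by
      rw [map_sub, map_smul, hℓe, smul_eq_mul, mul_one, sub_self]
    have := hpres _ hv0
    have h3 : ℓ (f.f2 (v - ℓ v • e)) = ℓ (f.f2 v) - ℓ v * c :=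
      (congrArg ℓ ((map_sub f.f2 v (ℓ v • e)).trans
        (congrArg (fun y => f.f2 v - y) (map_smul f.f2 (ℓ v) e)))).trans
        ((map_sub ℓ _ _).trans (congrArg (fun y => ℓ (f.f2 v) - y) (map_smul ℓ _ _)))
    replace this : ℓ (f.f2 v) = ℓ v * c := sub_eq_zero.mp (h3.symm.trans this)
    rw [this, mul_comm]
  have pow2 : ∀ j : ℕ, ∀ v : Fin n → k, ℓ ((f.pow j).f2 v) = c ^ j * ℓ v := by
    intro j
    induction j with
    | zero => intro v; simp [QHom.pow, QHom.idHom]; rfl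
    | succ j ih =>
      intro v
      have h1 : (f.pow (j + 1)).f2 v = f.f2 ((f.pow j).f2 v) := rfl
      rw [h1]; exact (key _).trans ((congrArg (c * ·) (ih v)).trans (by ring))
  have hcm : c ^ m = 0 := by
    have := pow2 m e
    rw [hm] at this
    simp only [QHom.zeroHom, LinearMap.zero_apply, map_zero] at this
    rw [hℓe, mul_one] at this
    exact this.symm
  have hc0 : c = 0 := by
    rcases Nat.eq_zero_or_pos m with hm0 | hm0
    · rw [hm0, pow_zero] at hcm; exact absurd hcm one_ne_zero
    · exact pow_eq_zero_iff (by omega) |>.mp hcm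
  have hzero : ∀ v : Fin n → k, f.f2 v ∈ LinearMap.range (jordan k n 0) := by
    intro v
    rw [hker]
    show ℓ (f.f2 v) = 0
    rw [key, hc0, zero_mul]
  refine ⟨⟨h12, by rw [h31, h12], h43.symm⟩, ?_, ?_⟩
  · rintro x ⟨v, rfl⟩
    rw [h12]
    exact hzero v
  · ext v
    simp only [LinearMap.comp_apply, LinearMap.zero_apply, Submodule.mkQ_apply,
      Submodule.Quotient.mk_eq_zero]
    exact (Submodule.Quotient.mk_eq_zero _).mpr (hzero v)
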